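/- If 0 ≤ α ≤ 1/2, f is convex of order α with p = |f''(0)|/(2(1-α)) ≤ α/(2-α), then 2(1-α)·(1 + α·(1+p)/(1-p)) ≤ 2, and hence (1-|z|²)²|Sf(z)| ≤ 2 for all z in the unit disk. -/

import Mathlib

open Metric Set Complex

lemma mob_normSq (a w : ℂ) :
    Complex.normSq (1 + (starRingEnd ℂ) a * w) - Complex.normSq (w + a)
      = (1 - Complex.normSq a) * (1 - Complex.normSq w) := by
  simp [Complex.normSq_apply, Complex.add_re, Complex.add_im, Complex.mul_re, Complex.mul_im,
    Complex.conj_re, Complex.conj_im]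
  ring

lemma abs_sub_one_lt (w : ℂ) (hw : 0 < w.re) :
    ‖w - 1‖ < ‖w + 1‖ := by
  apply lt_of_pow_lt_pow_left₀ 2 (norm_nonneg _)
  rw [Complex.sq_norm, Complex.sq_norm, Complex.normSq_apply, Complex.normSq_apply]
  simp [Complex.sub_re, Complex.sub_im, Complex.add_re, Complex.add_im]
  nlinarith
lemma mob_den_ne (a w : ℂ) (ha : ‖a‖ < 1) (hw : ‖w‖ < 1) :
    1 + (starRingEnd ℂ) a * w ≠ 0 := by
  intro h
  have h2 : ‖(starRingEnd ℂ) a * w‖ = 1 := by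
    have : (starRingEnd ℂ) a * w = -1 := by linear_combination h
    rw [this]; simp
  rw [norm_mul, Complex.norm_conj] at h2
  nlinarith [norm_nonneg a, norm_nonneg w]

lemma mob_maps (a w : ℂ) (ha : ‖a‖ < 1) (hw : ‖w‖ < 1) :
    ‖(w + a) / (1 + (starRingEnd ℂ) a * w)‖ < 1 := by
  rw [norm_div, div_lt_one (norm_pos_iff.mpr (mob_den_ne a w ha hw))]
  apply lt_of_pow_lt_pow_left₀ 2 (norm_nonneg _)
  rw [Complex.sq_norm, Complex.sq_norm]
  have h := mob_normSq a w
  have ha' : Complex.normSq a < 1 := by rw [← Complex.sq_norm]; nlinarith [norm_nonneg a]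
  have hw' : Complex.normSq w < 1 := by rw [← Complex.sq_norm]; nlinarith [norm_nonneg w]
  nlinarith

/-- Schwarz–Pick lemma. -/
lemma schwarz_pick {φ : ℂ → ℂ} (hφ : DifferentiableOn ℂ φ (ball 0 1))
    (hm : ∀ x ∈ ball (0:ℂ) 1, ‖φ x‖ < 1) {z : ℂ} (hz : z ∈ ball (0:ℂ) 1) :
    ‖deriv φ z‖ * (1 - ‖z‖ ^ 2) ≤ 1 - ‖φ z‖ ^ 2 := by
  have hz1 : ‖z‖ < 1 := by simpa [Complex.norm_def] using mem_ball_zero_iff.mp hz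
  set b := φ z with hbdef
  have hb1 : ‖b‖ < 1 := hm z hz
  set M : ℂ → ℂ := fun w => (w + z) / (1 + (starRingEnd ℂ) z * w) with hM
  set g : ℂ → ℂ := fun w => (w + (-b)) / (1 + (starRingEnd ℂ) (-b) * w) with hg
  set ψ : ℂ → ℂ := fun w => g (φ (M w)) with hψ
  -- maps
  have hMmaps : ∀ w ∈ ball (0:ℂ) 1, M w ∈ ball (0:ℂ) 1 := by
    intro w hw
    rw [mem_ball_zero_iff]
    exact_mod_cast mob_maps z w hz1 (by simpa [Complex.norm_def] using mem_ball_zero_iff.mp hw)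
  have hgmaps : ∀ w : ℂ, ‖w‖ < 1 → ‖g w‖ < 1 := by
    intro w hw
    exact mob_maps (-b) w (by simpa using hb1) hw
  have hψmaps : MapsTo ψ (ball (0:ℂ) 1) (ball (0:ℂ) 1) := by
    intro w hw
    rw [mem_ball_zero_iff]
    exact_mod_cast hgmaps _ (hm _ (hMmaps w hw))
  -- ψ 0 = 0
  have hM0 : M 0 = z := by simp [hM]
  have hψ0 : ψ 0 = 0 := by
    simp only [hψ, hM0, ← hbdef, hg]
    simp
  -- differentiability
  have hMdiff : DifferentiableOn ℂ M (ball 0 1) := by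
    apply DifferentiableOn.div
    · fun_prop
    · fun_prop
    · intro w hw
      exact mob_den_ne z w hz1 (by simpa [Complex.norm_def] using mem_ball_zero_iff.mp hw)
  have hψdiff : DifferentiableOn ℂ ψ (ball 0 1) := by
    intro w hw
    have h1 : DifferentiableAt ℂ M w := (hMdiff w hw).differentiableAt (isOpen_ball.mem_nhds hw)
    have h2 : DifferentiableAt ℂ φ (M w) :=
      (hφ _ (hMmaps w hw)).differentiableAt (isOpen_ball.mem_nhds (hMmaps w hw))
    have h3 : DifferentiableAt ℂ g (φ (M w)) := by
      apply DifferentiableAt.div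
      · fun_prop
      · fun_prop
      · exact mob_den_ne (-b) _ (by simpa using hb1) (hm _ (hMmaps w hw))
    exact ((h3.comp _ h2).comp _ h1).differentiableWithinAt
  -- derivative of ψ at 0
  have hφz : HasDerivAt φ (deriv φ z) z :=
    ((hφ z hz).differentiableAt (isOpen_ball.mem_nhds hz)).hasDerivAt
  have hnz : (1 : ℂ) + (starRingEnd ℂ) z * 0 ≠ 0 := by simp
  have hMd : HasDerivAt M (1 - (Complex.normSq z : ℂ)) 0 := by
    have h1 : HasDerivAt (fun w : ℂ => w + z) 1 0 := (hasDerivAt_id 0).add_const z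
    have h2 : HasDerivAt (fun w : ℂ => 1 + (starRingEnd ℂ) z * w) ((starRingEnd ℂ) z) 0 := by
      simpa using ((hasDerivAt_id 0).const_mul ((starRingEnd ℂ) z)).const_add 1
    have := h1.div h2 hnz
    refine this.congr_deriv (Eq.symm ?_)
    simp [Complex.mul_conj']
    exact_mod_cast (Complex.sq_norm z).symm
  have hnb : (0:ℝ) < 1 - Complex.normSq b := by
    rw [← Complex.sq_norm]; nlinarith [norm_nonneg b]
  have hnbne : (1 : ℂ) - (Complex.normSq b : ℂ) ≠ 0 := by
    intro h
    have : (Complex.normSq b : ℂ) = 1 := by linear_combination -h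
    have : Complex.normSq b = 1 := by exact_mod_cast this
    nlinarith
  have hgd : HasDerivAt g (1 - (Complex.normSq b : ℂ))⁻¹ b := by
    have h1 : HasDerivAt (fun w : ℂ => w + (-b)) 1 b := (hasDerivAt_id b).add_const (-b)
    have h2 : HasDerivAt (fun w : ℂ => 1 + (starRingEnd ℂ) (-b) * w) ((starRingEnd ℂ) (-b)) b := by
      simpa using ((hasDerivAt_id b).const_mul ((starRingEnd ℂ) (-b))).const_add 1
    have hden : (1 : ℂ) + (starRingEnd ℂ) (-b) * b ≠ 0 := by
      have : (1 : ℂ) + (starRingEnd ℂ) (-b) * b = 1 - (Complex.normSq b : ℂ) := by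
        rw [map_neg]; linear_combination (Complex.normSq_eq_conj_mul_self (z := b))
      rw [this]; exact hnbne
    have := h1.div h2 hden
    refine this.congr_deriv (Eq.symm ?_)
    have hc : (1 : ℂ) + (starRingEnd ℂ) (-b) * b = 1 - (Complex.normSq b : ℂ) := by
      rw [map_neg]; linear_combination (Complex.normSq_eq_conj_mul_self (z := b))
    rw [hc]
    field_simp
    ring
  have hφM : HasDerivAt (fun w => φ (M w)) (deriv φ z * (1 - (Complex.normSq z : ℂ))) 0 := by
    have hφz' : HasDerivAt φ (deriv φ z) (M 0) := by rw [hM0]; exact hφz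
    exact hφz'.comp 0 hMd
  have hgd' : HasDerivAt g (1 - (Complex.normSq b : ℂ))⁻¹ (φ (M 0)) := by
    rw [hM0, ← hbdef]; exact hgd
  have hψd : HasDerivAt ψ
      ((1 - (Complex.normSq b : ℂ))⁻¹ * (deriv φ z * (1 - (Complex.normSq z : ℂ)))) 0 :=
    by have := hgd'.comp 0 hφM; exact this
  have hS : ‖deriv ψ 0‖ ≤ 1 / 1 := by
    apply Complex.norm_deriv_le_div_of_mapsTo_ball hψdiff _ one_pos
    rw [hψ0]; exact hψmaps.mono_right ball_subset_closedBall
  rw [hψd.deriv] at hS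
  have hnorm : ‖(1 - (Complex.normSq b : ℂ))⁻¹ * (deriv φ z * (1 - (Complex.normSq z : ℂ)))‖
      = (1 - Complex.normSq b)⁻¹ * (‖deriv φ z‖ * (1 - Complex.normSq z)) := by
    have e1 : (1 : ℂ) - (Complex.normSq b : ℂ) = ((1 - Complex.normSq b : ℝ) : ℂ) := by push_cast; ring
    have e2 : (1 : ℂ) - (Complex.normSq z : ℂ) = ((1 - Complex.normSq z : ℝ) : ℂ) := by push_cast; ring
    have hnz' : (0:ℝ) ≤ 1 - Complex.normSq z := by
      rw [← Complex.sq_norm]; nlinarith [norm_nonneg z]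
    rw [e1, e2, norm_mul, norm_inv, norm_mul, Complex.norm_real, Complex.norm_real,
      Real.norm_of_nonneg hnb.le, Real.norm_of_nonneg hnz']
  rw [hnorm] at hS
  have hfin : ‖deriv φ z‖ * (1 - Complex.normSq z) ≤ 1 - Complex.normSq b := by
    rw [inv_mul_le_iff₀ hnb] at hS
    linarith [hS]
  rw [← Complex.sq_norm, ← Complex.sq_norm] at hfin
  exact hfin
-- main below

theorem schwarzian_bound_improves_suita_small_alpha
    (f : ℂ → ℂ) (α : ℝ) (hα0 : 0 ≤ α) (hα1 : α ≤ 1 / 2)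
    (hf : DifferentiableOn ℂ f (Metric.ball 0 1))
    (hf' : ∀ z ∈ Metric.ball (0:ℂ) 1, deriv f z ≠ 0)
    (hf0 : f 0 = 0) (hf1 : deriv f 0 = 1)
    (hconv : ∀ z ∈ Metric.ball (0:ℂ) 1,
      α < (1 + z * (deriv (deriv f) z / deriv f z)).re)
    (p : ℝ) (hp : p = ‖deriv (deriv f) 0‖ / (2 * (1 - α)))
    (hpb : p ≤ α / (2 - α)) :
    2 * (1 - α) * (1 + α * ((1 + p) / (1 - p))) ≤ 2 ∧
    ∀ z ∈ Metric.ball (0:ℂ) 1,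
      (1 - ‖z‖ ^ 2) ^ 2 *
        ‖deriv (deriv (deriv f)) z / deriv f z
          - 3 / 2 * (deriv (deriv f) z / deriv f z) ^ 2‖ ≤ 2 := by
  constructor
  · -- algebraic part
    have h2α : (0:ℝ) < 2 - α := by linarith
    have hp0 : 0 ≤ p := by
      rw [hp]; exact div_nonneg (norm_nonneg _) (by linarith)
    have hp3 : p ≤ 1/3 := le_trans hpb (by rw [div_le_iff₀ h2α]; linarith)
    have h1p : (0:ℝ) < 1 - p := by linarith
    have hpb' : p * (2 - α) ≤ α := by rwa [le_div_iff₀ h2α] at hpb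
    set t := (1 + p) / (1 - p) with htdef
    have ht : t * (1 - p) = 1 + p := div_mul_cancel₀ _ h1p.ne'
    have ht0 : 0 ≤ t := div_nonneg (by linarith) h1p.le
    have h5 : (1 - α) * (1 + p) ≤ 1 - p := by nlinarith
    have h6 : (1 - α) * t ≤ 1 := by
      have h7 : ((1 - α) * t) * (1 - p) ≤ 1 * (1 - p) := by
        calc ((1 - α) * t) * (1 - p) = (1 - α) * (1 + p) := by rw [mul_assoc, ht]
        _ ≤ 1 * (1 - p) := by linarith
      exact le_of_mul_le_mul_right h7 h1p
    nlinarith [mul_le_mul_of_nonneg_left h6 hα0]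
  · intro z hz
    have hAn : AnalyticOnNhd ℂ f (ball 0 1) := hf.analyticOnNhd isOpen_ball
    have hAn1 : AnalyticOnNhd ℂ (deriv f) (ball 0 1) := hAn.deriv
    have hAn2 : AnalyticOnNhd ℂ (deriv (deriv f)) (ball 0 1) := hAn1.deriv
    set q : ℂ → ℂ := fun w => deriv (deriv f) w / deriv f w with hqdef
    have hqd : ∀ w ∈ ball (0:ℂ) 1, DifferentiableAt ℂ q w := fun w hw =>
      ((hAn2 w hw).differentiableAt).div ((hAn1 w hw).differentiableAt) (hf' w hw)
    set h : ℂ → ℂ := fun w => 1 + w * q w with hhdef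
    have hhd : ∀ w ∈ ball (0:ℂ) 1, DifferentiableAt ℂ h w := fun w hw =>
      ((differentiableAt_id.mul (hqd w hw)).const_add 1)
    have hre : ∀ w ∈ ball (0:ℂ) 1, 0 < (h w).re := fun w hw =>
      lt_of_le_of_lt hα0 (hconv w hw)
    have hden : ∀ w ∈ ball (0:ℂ) 1, h w + 1 ≠ 0 := by
      intro w hw hc
      have h1 : (h w + 1).re = 0 := by rw [hc]; simp
      rw [Complex.add_re, Complex.one_re] at h1
      linarith [hre w hw]
    set ω : ℂ → ℂ := fun w => (h w - 1) / (h w + 1) with hωdef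
    have hω0 : ω 0 = 0 := by simp [hωdef, hhdef]
    have hωd : DifferentiableOn ℂ ω (ball 0 1) := fun w hw =>
      (((hhd w hw).sub_const 1).div ((hhd w hw).add_const 1) (hden w hw)).differentiableWithinAt
    have hωlt : ∀ w ∈ ball (0:ℂ) 1, ‖ω w‖ < 1 := by
      intro w hw
      rw [hωdef]
      simp only [norm_div]
      rw [div_lt_one (norm_pos_iff.mpr (hden w hw))]
      exact abs_sub_one_lt (h w) (hre w hw)
    set φ : ℂ → ℂ := dslope ω 0 with hφdef
    have h0mem : (0:ℂ) ∈ ball (0:ℂ) 1 := mem_ball_self one_pos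
    have hφd : DifferentiableOn ℂ φ (ball 0 1) :=
      (differentiableOn_dslope (isOpen_ball.mem_nhds h0mem)).mpr hωd
    have hωmaps : MapsTo ω (ball 0 1) (ball (ω 0) 1) := by
      intro w hw
      rw [hω0, mem_ball_zero_iff]
      simpa using hωlt w hw
    have hφle : ∀ w ∈ ball (0:ℂ) 1, ‖φ w‖ ≤ 1 := by
      intro w hw
      have := Complex.norm_dslope_le_div_of_mapsTo_ball hωd (hωmaps.mono_right ball_subset_closedBall) hw
      simpa using this
    have hωeq : ∀ w : ℂ, ω w = w * φ w := by
      intro w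
      have h1 : (w - 0) • dslope ω 0 w = ω w - ω 0 := sub_smul_dslope ω 0 w
      rw [hω0, sub_zero, sub_zero, smul_eq_mul] at h1
      exact h1.symm
    have hne : ∀ w ∈ ball (0:ℂ) 1, (1 : ℂ) - w * φ w ≠ 0 := by
      intro w hw hc
      have h1 : ‖w * φ w‖ = 1 := by
        have h2 : w * φ w = 1 := by linear_combination -hc
        rw [h2]; simp
      rw [norm_mul] at h1
      have hw1 : ‖w‖ < 1 := by
        simpa using mem_ball_zero_iff.mp hw
      nlinarith [hφle w hw, norm_nonneg w, norm_nonneg (φ w)]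
    have hqφ : ∀ w ∈ ball (0:ℂ) 1, q w = 2 * φ w / (1 - w * φ w) := by
      intro w hw
      rcases eq_or_ne w 0 with rfl | hw0
      · have hq0 : DifferentiableAt ℂ q 0 := hqd 0 h0mem
        have hh0 : HasDerivAt h (q 0) 0 := by
          have := ((hasDerivAt_id (0:ℂ)).mul hq0.hasDerivAt).const_add 1
          simpa [hhdef] using this
        have hval : h 0 = 1 := by simp [hhdef]
        have hωd0 : HasDerivAt ω (q 0 / 2) 0 := by
          have h3 := (hh0.sub_const 1).div (hh0.add_const 1) (hden 0 h0mem)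
          have h4 : (q 0 * (h 0 + 1) - (h 0 - 1) * q 0) / (h 0 + 1) ^ 2 = q 0 / 2 := by
            rw [hval]; ring
          rw [h4] at h3
          exact h3
        have hφ0 : φ 0 = q 0 / 2 := by rw [hφdef, dslope_same]; exact hωd0.deriv
        rw [hφ0]
        field_simp
        ring
      · have h1 : ω w * (h w + 1) = h w - 1 := div_mul_cancel₀ _ (hden w hw)
        rw [hωeq w] at h1
        have hhw : h w = 1 + w * q w := by rw [hhdef]
        rw [hhw] at h1
        have h2 : w * (φ w * (2 + w * q w)) = w * q w := by linear_combination h1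
        have h3 : φ w * (2 + w * q w) = q w := mul_left_cancel₀ hw0 h2
        rw [eq_div_iff (hne w hw)]
        linear_combination -h3
    -- at the point z
    have hφz : HasDerivAt φ (deriv φ z) z :=
      ((hφd z hz).differentiableAt (isOpen_ball.mem_nhds hz)).hasDerivAt
    have hDne : (1:ℂ) - z * φ z ≠ 0 := hne z hz
    have hf1z : HasDerivAt (deriv f) (deriv (deriv f) z) z :=
      (hAn1 z hz).differentiableAt.hasDerivAt
    have hf2z : HasDerivAt (deriv (deriv f)) (deriv (deriv (deriv f)) z) z :=
      (hAn2 z hz).differentiableAt.hasDerivAt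
    have hqz : HasDerivAt q ((deriv (deriv (deriv f)) z * deriv f z
        - deriv (deriv f) z * deriv (deriv f) z) / (deriv f z) ^ 2) z :=
      hf2z.div hf1z (hf' z hz)
    have hQz : HasDerivAt (fun w => 2 * φ w / (1 - w * φ w))
        ((2 * deriv φ z * (1 - z * φ z) - 2 * φ z * (-(1 * φ z + z * deriv φ z)))
          / (1 - z * φ z) ^ 2) z := by
      have hnum : HasDerivAt (fun w => 2 * φ w) (2 * deriv φ z) z := hφz.const_mul 2
      have hden2 : HasDerivAt (fun w => 1 - w * φ w) (-(1 * φ z + z * deriv φ z)) z := by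
        have := ((hasDerivAt_id z).mul hφz).const_sub 1
        simpa using this
      exact hnum.div hden2 hDne
    have heq : deriv q z = deriv (fun w => 2 * φ w / (1 - w * φ w)) z := by
      apply Filter.EventuallyEq.deriv_eq
      filter_upwards [isOpen_ball.mem_nhds hz] with w hw using hqφ w hw
    have hE : (deriv (deriv (deriv f)) z * deriv f z
        - deriv (deriv f) z * deriv (deriv f) z) / (deriv f z) ^ 2
        = (2 * deriv φ z * (1 - z * φ z) - 2 * φ z * (-(1 * φ z + z * deriv φ z)))
          / (1 - z * φ z) ^ 2 := by
      rw [← hqz.deriv, heq, hQz.deriv]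
    have hBC : deriv (deriv f) z / deriv f z = 2 * φ z / (1 - z * φ z) := by
      have := hqφ z hz
      rw [hqdef] at this
      exact this
    have hSid : deriv (deriv (deriv f)) z / deriv f z
        - 3 / 2 * (deriv (deriv f) z / deriv f z) ^ 2
        = 2 * deriv φ z / (1 - z * φ z) ^ 2 := by
      have hC := hf' z hz
      calc deriv (deriv (deriv f)) z / deriv f z
          - 3 / 2 * (deriv (deriv f) z / deriv f z) ^ 2
          = (deriv (deriv (deriv f)) z * deriv f z
              - deriv (deriv f) z * deriv (deriv f) z) / (deriv f z) ^ 2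
            - 1 / 2 * (deriv (deriv f) z / deriv f z) ^ 2 := by
            field_simp
            ring
        _ = (2 * deriv φ z * (1 - z * φ z) - 2 * φ z * (-(1 * φ z + z * deriv φ z)))
              / (1 - z * φ z) ^ 2 - 1 / 2 * (2 * φ z / (1 - z * φ z)) ^ 2 := by
            rw [hE, hBC]
        _ = 2 * deriv φ z / (1 - z * φ z) ^ 2 := by
            field_simp
            ring
    rw [hSid]
    -- final bound
    have hz1 : ‖z‖ < 1 := by
      simpa using mem_ball_zero_iff.mp hz
    rcases em (∃ x ∈ ball (0:ℂ) 1, ‖φ x‖ = 1) with ⟨x, hx, hxe⟩ | hlt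
    · have hmax : IsMaxOn (norm ∘ φ) (ball 0 1) x := by
        apply isMaxOn_iff.mpr
        intro y hy
        simp only [Function.comp_apply, hxe]
        exact hφle y hy
      have hconst : EqOn φ (Function.const ℂ (φ x)) (ball 0 1) :=
        Complex.eqOn_of_isPreconnected_of_isMaxOn_norm (convex_ball _ _).isPreconnected
          isOpen_ball hφd hx hmax
      have hderiv0 : deriv φ z = 0 := by
        have hev : φ =ᶠ[nhds z] (Function.const ℂ (φ x)) := by
          filter_upwards [isOpen_ball.mem_nhds hz] with w hw using hconst hw
        rw [hev.deriv_eq]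
        exact deriv_const _ _
      rw [hderiv0]
      simp
    · push_neg at hlt
      have hlt' : ∀ x ∈ ball (0:ℂ) 1, ‖φ x‖ < 1 := fun x hx =>
        lt_of_le_of_ne (hφle x hx) (hlt x hx)
      have hSP := schwarz_pick hφd hlt' hz
      have habs : ‖2 * deriv φ z / (1 - z * φ z) ^ 2‖
          = 2 * ‖deriv φ z‖ / ‖1 - z * φ z‖ ^ 2 := by
        rw [norm_div, norm_mul, norm_pow, Complex.norm_two]
      rw [habs]
      set az := ‖z‖ with hazdef
      set au := ‖φ z‖ with haudef
      set au' := ‖deriv φ z‖ with hau'def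
      set d := ‖1 - z * φ z‖ with hddef
      have hau1 : au < 1 := hlt' z hz
      have hd1 : 1 - az * au ≤ d := by
        have h8 := norm_add_le (1 - z * φ z) (z * φ z)
        simp only [sub_add_cancel, norm_one, norm_mul] at h8
        rw [hddef, hazdef, haudef]
        linarith
      have haz0 : 0 ≤ az := hazdef ▸ norm_nonneg z
      have hau0 : 0 ≤ au := haudef ▸ norm_nonneg (φ z)
      have hau'0 : 0 ≤ au' := hau'def ▸ norm_nonneg (deriv φ z)
      clear_value az au au' d
      clear hSid hE hBC hQz heq hqz hqφ hne hωeq hφle hωmaps hωlt hω0 habs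
      clear hφz hDne hf1z hf2z hqd hhd hre hden hωd hφd hlt hlt' hz
      clear hddef hau'def haudef hazdef
      clear hφdef hωdef hhdef hqdef φ ω h q hAn hAn1 hAn2 hf hf' hconv hf0 hf1 hp hpb h0mem
      have hazau : az * au < 1 := by nlinarith
      have hd0 : 0 < d := by nlinarith
      have key : (1 - az ^ 2) ^ 2 * (2 * au') ≤ 2 * d ^ 2 := by
        have k1 : (1 - az ^ 2) * (au' * (1 - az ^ 2)) ≤ (1 - az ^ 2) * (1 - au ^ 2) :=
          mul_le_mul_of_nonneg_left hSP (by nlinarith)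
        have k2 : (1 - az ^ 2) * (1 - au ^ 2) ≤ (1 - az * au) ^ 2 := by
          nlinarith [sq_nonneg (az - au)]
        have k3 : (1 - az * au) ^ 2 ≤ d ^ 2 := by nlinarith [hd1, hd0, hazau]
        nlinarith
      have hrw : (1 - az ^ 2) ^ 2 * (2 * au' / d ^ 2)
          = ((1 - az ^ 2) ^ 2 * (2 * au')) / d ^ 2 := by ring
      rw [hrw, div_le_iff₀ (by positivity)]
      linarith
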